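/- Let A be a real symmetric positive-definite matrix with 2x2 block structure A = [[A_FF, -A_FC], [-A_FC^T, A_CC]] with respect to a partition of its index set into sets F and C. Suppose D_FF is a symmetric matrix such that, with E := A_FF - D_FF and some real ε ≥ 0, both E and εD_FF - E are positive semidefinite, and suppose the matrix [[D_FF, -A_FC], [-A_FC^T, A_CC]] is positive semidefinite. (These hypotheses imply D_FF is positive definite, hence invertible, and that P^T A P below is invertible.) Define σ = 2/(2+ε), the relaxation error-propagation matrix R = I - σ·[[D_FF^{-1}, 0],[0, 0]]·A, the interpolation matrix P = [[D_FF^{-1} A_FC],[I]], and the coarse-grid correction error-propagation matrix T = I - P (P^T A P)^{-1} P^T A. Then for every positive integer ν, the two-grid error-propagation matrix MG₂ = R^ν T R^ν satisfies, for every vector x, (MG₂ x)^T A (MG₂ x) ≤ c²·(x^T A x), where c² = (ε/(1+ε))·(1 + ε^{2ν-1}/(2+ε)^{2ν}), and moreover c² < 1. -/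

import Mathlib

open Matrix

set_option linter.unusedSectionVars false
set_option maxHeartbeats 1600000

section AMGrHelpers

open scoped InnerProductSpace
open scoped MatrixOrder

variable {k : Type*} [Fintype k] [DecidableEq k]

private lemma quad_nonneg' {M : Matrix k k ℝ} (hM : M.PosSemidef) (x : k → ℝ) :
    0 ≤ x ⬝ᵥ (M *ᵥ x) := by simpa using hM.dotProduct_mulVec_nonneg x

private lemma posSemidef_of_quad' {M : Matrix k k ℝ} (hsym : Mᵀ = M)
    (h : ∀ x, 0 ≤ x ⬝ᵥ (M *ᵥ x)) : M.PosSemidef :=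
  .of_dotProduct_mulVec_nonneg (by rwa [IsHermitian, conjTranspose_eq_transpose_of_trivial])
    fun x => by simpa using h x

private lemma dot_cs (u v : k → ℝ) : (u ⬝ᵥ v)^2 ≤ (u ⬝ᵥ u) * (v ⬝ᵥ v) := by
  simpa [dotProduct, sq] using Finset.sum_mul_sq_le_sq_mul_sq Finset.univ u v

private lemma sym_sqrt' {M : Matrix k k ℝ} (hM : M.PosSemidef) :
    ∃ W : Matrix k k ℝ, W * W = M ∧ Wᵀ = W :=
  ⟨CFC.sqrt M, CFC.sqrt_mul_sqrt_self M hM.nonneg, by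
    have h : (CFC.sqrt M)ᴴ = CFC.sqrt M := (CFC.sqrt_nonneg M).posSemidef.1
    rwa [conjTranspose_eq_transpose_of_trivial] at h⟩

private lemma psd_cs {M : Matrix k k ℝ} (hM : M.PosSemidef) (x y : k → ℝ) :
    (x ⬝ᵥ (M *ᵥ y))^2 ≤ (x ⬝ᵥ (M *ᵥ x)) * (y ⬝ᵥ (M *ᵥ y)) := by
  obtain ⟨B, hBB, hBs⟩ := sym_sqrt' hM
  obtain rfl : M = Bᴴ * B := by rw [conjTranspose_eq_transpose_of_trivial, hBs, hBB]
  have key : ∀ w z : k → ℝ, w ⬝ᵥ ((Bᴴ * B) *ᵥ z) = (B *ᵥ w) ⬝ᵥ (B *ᵥ z) := by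
    intro w z
    rw [← mulVec_mulVec, conjTranspose_eq_transpose_of_trivial, dotProduct_mulVec,
      vecMul_transpose]
  rw [key, key, key]
  exact dot_cs _ _

private lemma dot_shift {a b : Type*} [Fintype a] [Fintype b] (M : Matrix a b ℝ)
    (u : a → ℝ) (v : b → ℝ) : u ⬝ᵥ (M *ᵥ v) = (Mᵀ *ᵥ u) ⬝ᵥ v := by
  rw [dotProduct_mulVec, ← transpose_transpose M, vecMul_transpose, transpose_transpose]

private lemma conj_quad {a c : Type*} [Fintype a] [Fintype c] (N : Matrix a c ℝ)
    (M : Matrix a a ℝ) (z : c → ℝ) :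
    z ⬝ᵥ ((Nᵀ * M * N) *ᵥ z) = (N *ᵥ z) ⬝ᵥ (M *ᵥ (N *ᵥ z)) := by
  rw [← mulVec_mulVec, ← mulVec_mulVec, dot_shift, transpose_transpose]

private lemma scalar_chord (ε d : ℝ) (hε : 0 ≤ ε) (m : ℕ) (hd0 : 0 ≤ d) (hd1 : d ≤ 1 + ε) :
    (1 - (2/(2+ε)) * d) ^ (2*m) ≤ 1 - ((1 - (ε/(2+ε))^(2*m))/(1+ε)) * d := by
  have h2 : (0:ℝ) < 2 + ε := by linarith
  have h1 : (0:ℝ) < 1 + ε := by linarith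
  have hcx : ConvexOn ℝ Set.univ (fun x : ℝ => x ^ (2*m)) := (even_two_mul m).convexOn_pow
  have ha : (0:ℝ) ≤ 1 - d/(1+ε) := by
    rw [sub_nonneg, div_le_one h1]; exact hd1
  have hb : (0:ℝ) ≤ d/(1+ε) := by positivity
  have hab : (1 - d/(1+ε)) + d/(1+ε) = 1 := by ring
  have hcomb := hcx.2 (Set.mem_univ (1:ℝ)) (Set.mem_univ (-(ε/(2+ε)))) ha hb hab
  simp only [smul_eq_mul] at hcomb
  have harg : (1 - d/(1+ε)) * 1 + d/(1+ε) * (-(ε/(2+ε))) = 1 - (2/(2+ε)) * d := by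
    field_simp; ring
  rw [harg] at hcomb
  refine hcomb.trans (le_of_eq ?_)
  rw [one_pow, Even.neg_pow (even_two_mul m)]
  field_simp
  ring

private lemma eig_le' {B : Matrix k k ℝ} (hB : B.PosSemidef) (κ : ℝ) (hκ : 0 ≤ κ)
    (h2 : ∀ z : k → ℝ, z ⬝ᵥ (B *ᵥ (B *ᵥ z)) ≤ κ * (z ⬝ᵥ (B *ᵥ z))) (i : k) :
    hB.1.eigenvalues i ≤ κ := by
  set d := hB.1.eigenvalues i with hd
  have hd0 : 0 ≤ d := hB.eigenvalues_nonneg i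
  set v : k → ℝ := ⇑(hB.1.eigenvectorBasis i) with hv
  have hBv : B *ᵥ v = d • v := hB.1.mulVec_eigenvectorBasis i
  have hvv : v ⬝ᵥ v = 1 := by
    have hnorm : ‖hB.1.eigenvectorBasis i‖ = 1 := hB.1.eigenvectorBasis.orthonormal.1 i
    have h : (⟪hB.1.eigenvectorBasis i, hB.1.eigenvectorBasis i⟫_ℝ) = 1 := by
      rw [real_inner_self_eq_norm_mul_norm, hnorm]; norm_num
    rw [PiLp.inner_apply] at h
    rw [← h]
    simp [dotProduct, hv, mul_comm]
    simp only [sq]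
  have h3 := h2 v
  rw [hBv, mulVec_smul, hBv] at h3
  have e1 : v ⬝ᵥ (d • d • v) = d * d := by
    rw [dotProduct_smul, dotProduct_smul, hvv]; simp [smul_eq_mul]
  have e2 : v ⬝ᵥ (d • v) = d := by rw [dotProduct_smul, hvv]; simp [smul_eq_mul]
  rw [e1, e2] at h3
  nlinarith

private lemma spec_bound {B : Matrix k k ℝ} (hB : B.PosSemidef) (σ b κ : ℝ) (m : ℕ)
    (hev : ∀ i, hB.1.eigenvalues i ≤ κ)
    (hsc : ∀ d : ℝ, 0 ≤ d → d ≤ κ → (1 - σ * d) ^ m ≤ 1 - b * d) (z : k → ℝ) :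
    z ⬝ᵥ (((1 - σ • B) ^ m) *ᵥ z) ≤ z ⬝ᵥ z - b * (z ⬝ᵥ (B *ᵥ z)) := by
  set U : Matrix k k ℝ := (hB.1.eigenvectorUnitary : Matrix k k ℝ) with hUdef
  have hU1 : U * Uᵀ = 1 := by
    have h := mem_unitaryGroup_iff.mp hB.1.eigenvectorUnitary.2
    rwa [star_eq_conjTranspose, conjTranspose_eq_transpose_of_trivial] at h
  have hU2 : Uᵀ * U = 1 := by
    have h := mem_unitaryGroup_iff'.mp hB.1.eigenvectorUnitary.2
    rwa [star_eq_conjTranspose, conjTranspose_eq_transpose_of_trivial] at h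
  have hcancel : ∀ X : Matrix k k ℝ, Uᵀ * (U * X) = X := by
    intro X; rw [← Matrix.mul_assoc, hU2, Matrix.one_mul]
  set ev := hB.1.eigenvalues with hevdef
  have hBspec : B = U * diagonal ev * Uᵀ := by
    have h := hB.1.spectral_theorem
    rw [Unitary.conjStarAlgAut_apply] at h
    rwa [star_eq_conjTranspose, conjTranspose_eq_transpose_of_trivial,
      RCLike.ofReal_real_eq_id, Function.id_comp] at h
  have hpow : ∀ (D : Matrix k k ℝ) (j : ℕ), (U * D * Uᵀ) ^ j = U * D ^ j * Uᵀ := by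
    intro D j
    induction j with
    | zero => simpa using hU1.symm
    | succ i ih =>
      rw [pow_succ, ih, pow_succ]
      simp only [Matrix.mul_assoc, hcancel]
  have hconj : ∀ c : ℝ, (1 : Matrix k k ℝ) - c • B = U * diagonal (fun i => 1 - c * ev i) * Uᵀ := by
    intro c
    have h1 : (1 : Matrix k k ℝ) = U * (1 : Matrix k k ℝ) * Uᵀ := by
      rw [Matrix.mul_one, hU1]
    have h2 : c • B = U * (c • diagonal ev) * Uᵀ := by
      rw [hBspec]; simp only [Matrix.mul_smul, Matrix.smul_mul]
    rw [h2]
    nth_rewrite 1 [h1]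
    rw [← Matrix.sub_mul, ← Matrix.mul_sub]
    congr 2
    rw [← diagonal_one, ← diagonal_smul, diagonal_sub]
    congr 1
  have hQm : ((1 : Matrix k k ℝ) - σ • B) ^ m
      = U * diagonal (fun i => (1 - σ * ev i) ^ m) * Uᵀ := by
    rw [hconj σ, hpow, diagonal_pow]
    rfl
  have heq : (1 - b • B) - (1 - σ • B) ^ m
      = U * diagonal (fun i => (1 - b * ev i) - (1 - σ * ev i) ^ m) * Uᵀ := by
    rw [hQm, hconj b, ← Matrix.sub_mul, ← Matrix.mul_sub, diagonal_sub]
  have key : ((1 - b • B) - (1 - σ • B) ^ m).PosSemidef := by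
    rw [heq]
    have hd : (Matrix.PosSemidef (diagonal
        (fun i => (1 - b * ev i) - (1 - σ * ev i) ^ m))) := by
      refine Matrix.PosSemidef.diagonal fun i => ?_
      have := hsc (ev i) (hB.eigenvalues_nonneg i) (hev i)
      simpa [sub_nonneg] using this
    have h := hd.mul_mul_conjTranspose_same U
    rwa [conjTranspose_eq_transpose_of_trivial] at h
  have h0 := quad_nonneg' key z
  have expand : z ⬝ᵥ (((1 - b • B) - (1 - σ • B) ^ m) *ᵥ z)
      = (z ⬝ᵥ z - b * (z ⬝ᵥ (B *ᵥ z))) - z ⬝ᵥ ((1 - σ • B) ^ m *ᵥ z) := by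
    simp [sub_mulVec, dotProduct_sub, smul_mulVec, dotProduct_smul, one_mulVec,
      smul_eq_mul]
  rw [expand] at h0
  linarith

private lemma quad_fromBlocks {F C : Type*} [Fintype F] [Fintype C]
    (M11 : Matrix F F ℝ) (M12 : Matrix F C ℝ) (M21 : Matrix C F ℝ) (M22 : Matrix C C ℝ)
    (y : F ⊕ C → ℝ) :
    y ⬝ᵥ (fromBlocks M11 M12 M21 M22 *ᵥ y)
      = (y ∘ Sum.inl) ⬝ᵥ (M11 *ᵥ (y ∘ Sum.inl)) + (y ∘ Sum.inl) ⬝ᵥ (M12 *ᵥ (y ∘ Sum.inr))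
        + ((y ∘ Sum.inr) ⬝ᵥ (M21 *ᵥ (y ∘ Sum.inl))
          + (y ∘ Sum.inr) ⬝ᵥ (M22 *ᵥ (y ∘ Sum.inr))) := by
  nth_rewrite 1 [← Sum.elim_comp_inl_inr y]
  rw [fromBlocks_mulVec, sumElim_dotProduct_sumElim, dotProduct_add, dotProduct_add]

end AMGrHelpers

/-- Two-grid AMGr convergence bound (MacLachlan–Manteuffel–McCormick):
if `A = [[A_FF, -A_FC], [-A_FCᵀ, A_CC]]` is symmetric positive definite,
`D_FF` is symmetric with `0 ⪯ A_FF - D_FF ⪯ ε • D_FF`, and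
`[[D_FF, -A_FC], [-A_FCᵀ, A_CC]] ⪰ 0`, then the two-grid error propagation
operator `MG₂ = R^ν T R^ν` contracts the `A`-norm with factor
`c² = (ε/(1+ε)) (1 + ε^(2ν-1)/(2+ε)^(2ν)) < 1`. -/
theorem amgr_two_grid_convergence
    {F C : Type*} [Fintype F] [Fintype C] [DecidableEq F] [DecidableEq C]
    (A_FF D_FF : Matrix F F ℝ) (A_FC : Matrix F C ℝ) (A_CC : Matrix C C ℝ)
    (ε : ℝ) (hε : 0 ≤ ε)
    (hDsym : D_FFᵀ = D_FF)
    (hE : (A_FF - D_FF).PosSemidef)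
    (hEε : (ε • D_FF - (A_FF - D_FF)).PosSemidef)
    (A : Matrix (F ⊕ C) (F ⊕ C) ℝ)
    (hAdef : A = Matrix.fromBlocks A_FF (-A_FC) (-A_FCᵀ) A_CC)
    (hA : A.PosDef)
    (hD : (Matrix.fromBlocks D_FF (-A_FC) (-A_FCᵀ) A_CC).PosSemidef)
    (σ : ℝ) (hσ : σ = 2 / (2 + ε))
    (R : Matrix (F ⊕ C) (F ⊕ C) ℝ)
    (hR : R = 1 - σ • (Matrix.fromBlocks D_FF⁻¹ 0 0 0 * A))
    (P : Matrix (F ⊕ C) C ℝ)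
    (hP : P = Matrix.fromRows (D_FF⁻¹ * A_FC) 1)
    (T : Matrix (F ⊕ C) (F ⊕ C) ℝ)
    (hT : T = 1 - P * (Pᵀ * A * P)⁻¹ * Pᵀ * A)
    (ν : ℕ) (hν : 1 ≤ ν)
    (MG : Matrix (F ⊕ C) (F ⊕ C) ℝ)
    (hMG : MG = R ^ ν * T * R ^ ν) :
    (∀ x : F ⊕ C → ℝ,
        (MG *ᵥ x) ⬝ᵥ (A *ᵥ (MG *ᵥ x)) ≤
          ((ε / (1 + ε)) * (1 + ε ^ (2 * ν - 1) / (2 + ε) ^ (2 * ν))) * (x ⬝ᵥ (A *ᵥ x)))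
      ∧ (ε / (1 + ε)) * (1 + ε ^ (2 * ν - 1) / (2 + ε) ^ (2 * ν)) < 1 := by
  -- scalar setup
  have h2ε : (0:ℝ) < 2 + ε := by linarith
  have h1ε : (0:ℝ) < 1 + ε := by linarith
  set ρ : ℝ := ε / (2 + ε) with hρ
  have hρ0 : 0 ≤ ρ := by positivity
  have hρ1 : ρ < 1 := by rw [hρ, div_lt_one h2ε]; linarith
  set b : ℝ := (1 - ρ ^ (2*ν)) / (1 + ε) with hbdef
  have hρpow1 : ρ ^ (2*ν) ≤ 1 := pow_le_one₀ hρ0 hρ1.le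
  have hρpowlt : ρ ^ (2*ν) < 1 := pow_lt_one₀ hρ0 hρ1 (by omega)
  have hb0 : 0 ≤ b := by
    rw [hbdef]; apply div_nonneg _ h1ε.le; linarith
  have hbpos : 0 < b := by
    rw [hbdef]; apply div_pos _ h1ε; linarith
  have hb1 : 0 ≤ 1 - b := by
    rw [hbdef, sub_nonneg, div_le_one h1ε]
    have : 0 ≤ ρ ^ (2*ν) := by positivity
    linarith
  have hc : (ε / (1 + ε)) * (1 + ε ^ (2 * ν - 1) / (2 + ε) ^ (2 * ν)) = 1 - b := by
    obtain ⟨m, hm⟩ : ∃ m, ν = m + 1 := ⟨ν - 1, by omega⟩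
    subst hm
    have h21 : 2 * (m + 1) - 1 = 2 * m + 1 := by omega
    have h22 : 2 * (m + 1) = 2 * m + 2 := by omega
    rw [h21, hbdef, hρ, h22, div_pow]
    field_simp
    ring
  refine ⟨?_, by rw [hc]; linarith⟩
  -- basic symmetric/positivity facts
  have hAsym : Aᵀ = A := by
    have h : Aᴴ = A := hA.1
    rwa [conjTranspose_eq_transpose_of_trivial] at h
  have hquadA : ∀ v, 0 ≤ v ⬝ᵥ (A *ᵥ v) := quad_nonneg' hA.posSemidef
  have hEq : ∀ w : F → ℝ, w ⬝ᵥ (D_FF *ᵥ w) ≤ w ⬝ᵥ (A_FF *ᵥ w) := by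
    intro w
    have h := hE.dotProduct_mulVec_nonneg w
    simp only [star_trivial, sub_mulVec, dotProduct_sub] at h
    linarith
  have hEεq : ∀ w : F → ℝ, w ⬝ᵥ (A_FF *ᵥ w) ≤ (1 + ε) * (w ⬝ᵥ (D_FF *ᵥ w)) := by
    intro w
    have h := hEε.dotProduct_mulVec_nonneg w
    simp only [star_trivial, sub_mulVec, dotProduct_sub, smul_mulVec,
      dotProduct_smul, smul_eq_mul] at h
    nlinarith
  have hquadAF : ∀ y : F → ℝ, (Sum.elim y 0) ⬝ᵥ (A *ᵥ Sum.elim y 0) = y ⬝ᵥ (A_FF *ᵥ y) := by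
    intro y
    rw [hAdef, quad_fromBlocks]
    simp
  -- D_FF is positive definite
  have hDpd : D_FF.PosDef := by
    refine Matrix.PosDef.of_dotProduct_mulVec_pos ?_ ?_
    · show D_FFᴴ = D_FF
      rwa [conjTranspose_eq_transpose_of_trivial]
    · intro w hw
      have hv : Sum.elim w (0 : C → ℝ) ≠ 0 := by
        intro hcon
        apply hw
        funext i
        exact congrFun hcon (Sum.inl i)
      have h1 : 0 < (Sum.elim w 0) ⬝ᵥ (A *ᵥ Sum.elim w 0) := by simpa using hA.dotProduct_mulVec_pos hv
      rw [hquadAF] at h1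
      have h2 := hEεq w
      have h3 : 0 < w ⬝ᵥ (D_FF *ᵥ w) := by nlinarith
      simpa using h3
  have hDdet : IsUnit D_FF.det := isUnit_iff_ne_zero.mpr hDpd.det_pos.ne'
  have hDDinv : D_FF * D_FF⁻¹ = 1 := mul_nonsing_inv _ hDdet
  have hDinvsym : (D_FF⁻¹)ᵀ = D_FF⁻¹ := by rw [transpose_nonsing_inv, hDsym]
  have hDinvpd : (D_FF⁻¹).PosDef := hDpd.inv
  have hDinvq : ∀ g : F → ℝ, 0 ≤ g ⬝ᵥ (D_FF⁻¹ *ᵥ g) := quad_nonneg' hDinvpd.posSemidef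
  set Dinv : Matrix (F ⊕ C) (F ⊕ C) ℝ := fromBlocks D_FF⁻¹ 0 0 0 with hDinvdef
  have hDinvSym : Dinvᵀ = Dinv := by
    rw [hDinvdef, fromBlocks_transpose, hDinvsym]
    simp
  have hDinvMul : ∀ y : (F ⊕ C) → ℝ, Dinv *ᵥ y = Sum.elim (D_FF⁻¹ *ᵥ (y ∘ Sum.inl)) 0 := by
    intro y
    rw [hDinvdef, fromBlocks_mulVec]
    simp
  have hDinvQuad : ∀ y : (F ⊕ C) → ℝ,
      y ⬝ᵥ (Dinv *ᵥ y) = (y ∘ Sum.inl) ⬝ᵥ (D_FF⁻¹ *ᵥ (y ∘ Sum.inl)) := by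
    intro y
    rw [hDinvMul y]
    nth_rewrite 1 [← Sum.elim_comp_inl_inr y]
    rw [sumElim_dotProduct_sumElim]
    simp
  have hDinvPSD : Dinv.PosSemidef := by
    refine posSemidef_of_quad' hDinvSym fun y => ?_
    rw [hDinvQuad]
    exact hDinvq _
  -- the square root W of A
  obtain ⟨W, hWW, hWsym⟩ := sym_sqrt' hA.posSemidef
  have normW : ∀ v, v ⬝ᵥ (A *ᵥ v) = (W *ᵥ v) ⬝ᵥ (W *ᵥ v) := by
    intro v
    rw [← hWW, ← mulVec_mulVec, dot_shift, hWsym]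
  -- the symmetric matrix B = W Dinv W
  set B : Matrix (F ⊕ C) (F ⊕ C) ℝ := W * Dinv * W with hBdef
  have hBsym : Bᵀ = B := by
    rw [hBdef, transpose_mul, transpose_mul, hWsym, hDinvSym, Matrix.mul_assoc]
  have hBpsd : B.PosSemidef := by
    have h := hDinvPSD.mul_mul_conjTranspose_same W
    rwa [conjTranspose_eq_transpose_of_trivial, hWsym, ← hBdef] at h
  have hBquad : ∀ v, v ⬝ᵥ (B *ᵥ v) = (W *ᵥ v) ⬝ᵥ (Dinv *ᵥ (W *ᵥ v)) := by
    intro v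
    have h := conj_quad W Dinv v
    rwa [hWsym, ← hBdef] at h
  have hB2 : ∀ z, z ⬝ᵥ (B *ᵥ (B *ᵥ z)) ≤ (1 + ε) * (z ⬝ᵥ (B *ᵥ z)) := by
    intro z
    have hBB : B * B = W * (Dinv * A * Dinv) * W := by
      rw [hBdef]
      calc W * Dinv * W * (W * Dinv * W) = W * (Dinv * (W * W) * Dinv) * W := by
            simp only [Matrix.mul_assoc]
        _ = W * (Dinv * A * Dinv) * W := by rw [hWW]
    have c1 := conj_quad W (Dinv * A * Dinv) z
    rw [hWsym] at c1
    have c2 := conj_quad Dinv A (W *ᵥ z)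
    rw [hDinvSym] at c2
    have h1 : z ⬝ᵥ (B *ᵥ (B *ᵥ z)) = (Dinv *ᵥ (W *ᵥ z)) ⬝ᵥ (A *ᵥ (Dinv *ᵥ (W *ᵥ z))) := by
      rw [mulVec_mulVec, hBB, c1, c2]
    have h2 : Dinv *ᵥ (W *ᵥ z) = Sum.elim (D_FF⁻¹ *ᵥ ((W *ᵥ z) ∘ Sum.inl)) 0 :=
      hDinvMul (W *ᵥ z)
    have h5 : z ⬝ᵥ (B *ᵥ z) = ((W *ᵥ z) ∘ Sum.inl) ⬝ᵥ (D_FF⁻¹ *ᵥ ((W *ᵥ z) ∘ Sum.inl)) := by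
      rw [hBquad, hDinvQuad]
    rw [h1, h2, hquadAF, h5]
    have h3 := hEεq (D_FF⁻¹ *ᵥ ((W *ᵥ z) ∘ Sum.inl))
    have h4 : (D_FF⁻¹ *ᵥ ((W *ᵥ z) ∘ Sum.inl)) ⬝ᵥ (D_FF *ᵥ (D_FF⁻¹ *ᵥ ((W *ᵥ z) ∘ Sum.inl)))
        = ((W *ᵥ z) ∘ Sum.inl) ⬝ᵥ (D_FF⁻¹ *ᵥ ((W *ᵥ z) ∘ Sum.inl)) := by
      rw [mulVec_mulVec, hDDinv, one_mulVec, dotProduct_comm]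
    rw [h4] at h3
    exact h3
  -- eigenvalues of B lie in [0, 1+ε]
  have hev : ∀ i, hBpsd.1.eigenvalues i ≤ 1 + ε := eig_le' hBpsd (1 + ε) h1ε.le hB2
  -- the transformed smoother Q
  set Q : Matrix (F ⊕ C) (F ⊕ C) ℝ := 1 - σ • B with hQdef
  have hWR : W * R = Q * W := by
    rw [hR, hQdef, Matrix.mul_sub, Matrix.sub_mul, Matrix.mul_one, Matrix.one_mul,
      Matrix.mul_smul, Matrix.smul_mul, hBdef]
    congr 2
    calc W * (Dinv * A) = W * (Dinv * (W * W)) := by rw [hWW]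
      _ = W * Dinv * W * W := by simp only [Matrix.mul_assoc]
  have hWRn : ∀ j : ℕ, W * R ^ j = Q ^ j * W := by
    intro j
    induction j with
    | zero => simp
    | succ i ih =>
      rw [pow_succ, pow_succ, ← Matrix.mul_assoc, ih, Matrix.mul_assoc, hWR,
        ← Matrix.mul_assoc]
  have hWRv : ∀ v, W *ᵥ (R ^ ν *ᵥ v) = Q ^ ν *ᵥ (W *ᵥ v) := by
    intro v
    rw [mulVec_mulVec, hWRn, ← mulVec_mulVec]
  have hQsym : Qᵀ = Q := by
    rw [hQdef, transpose_sub, transpose_smul, hBsym, transpose_one]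
  have hQnorm : ∀ z, (Q ^ ν *ᵥ z) ⬝ᵥ (Q ^ ν *ᵥ z) = z ⬝ᵥ ((Q ^ (2*ν)) *ᵥ z) := by
    intro z
    have hνν : ν + ν = 2 * ν := by omega
    rw [dot_shift (Q ^ ν), transpose_pow, hQsym, mulVec_mulVec, ← pow_add, hνν,
      dotProduct_comm]
  -- the two spectral bounds
  have spec0 : ∀ z : (F ⊕ C) → ℝ, z ⬝ᵥ ((Q ^ (2*ν)) *ᵥ z) ≤ z ⬝ᵥ z := by
    intro z
    have h := spec_bound hBpsd σ 0 (1 + ε) (2*ν) hev (fun d hd0 hd1 => by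
      rw [zero_mul, sub_zero, hσ, pow_mul]
      have hda : 2 / (2 + ε) * d ≤ 2 := by
        rw [div_mul_eq_mul_div, div_le_iff₀ h2ε]
        nlinarith
      have hdb : 0 ≤ 2 / (2 + ε) * d := by positivity
      have h1 : (1 - 2 / (2 + ε) * d) ^ 2 ≤ 1 := by nlinarith
      exact pow_le_one₀ (sq_nonneg _) h1) z
    rw [hQdef]
    simpa using h
  have spec1 : ∀ z : (F ⊕ C) → ℝ,
      z ⬝ᵥ ((Q ^ (2*ν)) *ᵥ z) ≤ z ⬝ᵥ z - b * (z ⬝ᵥ (B *ᵥ z)) := by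
    intro z
    have h := spec_bound hBpsd σ b (1 + ε) (2*ν) hev (fun d hd0 hd1 => by
      have hch := scalar_chord ε d hε ν hd0 hd1
      rw [hσ, hbdef, hρ]
      exact hch) z
    rw [hQdef]
    exact h
  -- P^T A P is positive definite
  have hPAPherm : (Pᵀ * A * P)ᵀ = Pᵀ * A * P := by
    rw [transpose_mul, transpose_mul, transpose_transpose, hAsym, Matrix.mul_assoc]
  have hPAPpd : (Pᵀ * A * P).PosDef := by
    refine Matrix.PosDef.of_dotProduct_mulVec_pos ?_ ?_
    · show (Pᵀ * A * P)ᴴ = Pᵀ * A * P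
      rwa [conjTranspose_eq_transpose_of_trivial]
    · intro c hc
      have hPc : P *ᵥ c ≠ 0 := by
        intro hcon
        apply hc
        funext j
        have hj := congrFun hcon (Sum.inr j)
        rw [hP, fromRows_mulVec] at hj
        simpa using hj
      have h := hA.dotProduct_mulVec_pos hPc
      simp only [star_trivial] at h ⊢
      rw [conj_quad P A c]
      exact h
  have hPAPdet : IsUnit (Pᵀ * A * P).det := isUnit_iff_ne_zero.mpr hPAPpd.det_pos.ne'
  set G : Matrix C C ℝ := (Pᵀ * A * P)⁻¹ with hGdef
  have hPAPG : Pᵀ * A * P * G = 1 := mul_nonsing_inv _ hPAPdet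
  have hPAT : Pᵀ * A * T = 0 := by
    rw [hT, Matrix.mul_sub, Matrix.mul_one]
    have h : Pᵀ * A * (P * G * Pᵀ * A) = Pᵀ * A := by
      calc Pᵀ * A * (P * G * Pᵀ * A) = (Pᵀ * A * P * G) * (Pᵀ * A) := by
            simp only [Matrix.mul_assoc]
        _ = Pᵀ * A := by rw [hPAPG, Matrix.one_mul]
    rw [h, sub_self]
  -- the coarse-grid correction is an A-orthogonal projection: contraction in A-norm
  have hTcon : ∀ y, (T *ᵥ y) ⬝ᵥ (A *ᵥ (T *ᵥ y)) ≤ y ⬝ᵥ (A *ᵥ y) := by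
    intro y
    set s := T *ᵥ y with hsdef
    set p := (P * G * Pᵀ * A) *ᵥ y with hp
    have hyp : y = s + p := by
      rw [hsdef, hT, sub_mulVec, one_mulVec, ← hp]
      abel
    have hPAs : Pᵀ *ᵥ (A *ᵥ s) = 0 := by
      rw [hsdef, mulVec_mulVec, mulVec_mulVec, hPAT, zero_mulVec]
    have hpP : p = P *ᵥ ((G * Pᵀ * A) *ᵥ y) := by
      rw [hp, mulVec_mulVec]
      congr 1
      simp only [Matrix.mul_assoc]
    have hcross : s ⬝ᵥ (A *ᵥ p) = 0 := by
      rw [hpP, mulVec_mulVec, dot_shift, transpose_mul, hAsym, ← mulVec_mulVec, hPAs,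
        zero_dotProduct]
    have hcross2 : p ⬝ᵥ (A *ᵥ s) = 0 := by
      rw [hpP, dotProduct_comm, dot_shift, hPAs, zero_dotProduct]
    have hexp : y ⬝ᵥ (A *ᵥ y) = s ⬝ᵥ (A *ᵥ s) + p ⬝ᵥ (A *ᵥ p) := by
      rw [hyp, mulVec_add, dotProduct_add, add_dotProduct, add_dotProduct, hcross, hcross2]
      ring
    rw [hexp]
    have := hquadA p
    linarith
  -- the key inequality on the range of T
  have hF2 : ∀ s : (F ⊕ C) → ℝ, Pᵀ *ᵥ (A *ᵥ s) = 0 →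
      s ⬝ᵥ (A *ᵥ s) ≤ (A *ᵥ s) ⬝ᵥ (Dinv *ᵥ (A *ᵥ s)) := by
    intro s hPAs
    have hinr : (A *ᵥ s) ∘ Sum.inr = -(A_FCᵀ *ᵥ (D_FF⁻¹ *ᵥ ((A *ᵥ s) ∘ Sum.inl))) := by
      have h1 : Pᵀ *ᵥ (A *ᵥ s)
          = A_FCᵀ *ᵥ (D_FF⁻¹ *ᵥ ((A *ᵥ s) ∘ Sum.inl)) + (A *ᵥ s) ∘ Sum.inr := by
        rw [hP, transpose_fromRows, transpose_one]
        nth_rewrite 1 [← Sum.elim_comp_inl_inr (A *ᵥ s)]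
        rw [fromCols_mulVec_sumElim, one_mulVec, transpose_mul, hDinvsym,
          ← mulVec_mulVec]
      rw [hPAs] at h1
      exact eq_neg_of_add_eq_zero_right h1.symm
    have hAmu : fromBlocks D_FF (-A_FC) (-A_FCᵀ) A_CC *ᵥ
        (Sum.elim (D_FF⁻¹ *ᵥ ((A *ᵥ s) ∘ Sum.inl)) 0) = A *ᵥ s := by
      rw [fromBlocks_mulVec, Sum.elim_comp_inl, Sum.elim_comp_inr]
      rw [mulVec_zero, mulVec_zero, add_zero, add_zero, mulVec_mulVec, hDDinv, one_mulVec,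
        neg_mulVec, ← hinr]
      exact Sum.elim_comp_inl_inr _
    have hcs := psd_cs hD s (Sum.elim (D_FF⁻¹ *ᵥ ((A *ᵥ s) ∘ Sum.inl)) 0)
    rw [hAmu] at hcs
    have huh : (Sum.elim (D_FF⁻¹ *ᵥ ((A *ᵥ s) ∘ Sum.inl)) 0) ⬝ᵥ (A *ᵥ s)
        = ((A *ᵥ s) ∘ Sum.inl) ⬝ᵥ (D_FF⁻¹ *ᵥ ((A *ᵥ s) ∘ Sum.inl)) := by
      nth_rewrite 2 [← Sum.elim_comp_inl_inr (A *ᵥ s)]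
      rw [sumElim_dotProduct_sumElim, zero_dotProduct, add_zero, dotProduct_comm]
    rw [huh] at hcs
    have hAmq : s ⬝ᵥ (fromBlocks D_FF (-A_FC) (-A_FCᵀ) A_CC *ᵥ s) ≤ s ⬝ᵥ (A *ᵥ s) := by
      conv_rhs => rw [hAdef]
      rw [quad_fromBlocks, quad_fromBlocks]
      have := hEq (s ∘ Sum.inl)
      linarith
    have hDq : (A *ᵥ s) ⬝ᵥ (Dinv *ᵥ (A *ᵥ s))
        = ((A *ᵥ s) ∘ Sum.inl) ⬝ᵥ (D_FF⁻¹ *ᵥ ((A *ᵥ s) ∘ Sum.inl)) := hDinvQuad (A *ᵥ s)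
    rw [hDq]
    have ha0 : 0 ≤ s ⬝ᵥ (A *ᵥ s) := hquadA s
    have hr0 : 0 ≤ ((A *ᵥ s) ∘ Sum.inl) ⬝ᵥ (D_FF⁻¹ *ᵥ ((A *ᵥ s) ∘ Sum.inl)) := hDinvq _
    have hAs0 : 0 ≤ s ⬝ᵥ (fromBlocks D_FF (-A_FC) (-A_FCᵀ) A_CC *ᵥ s) := quad_nonneg' hD s
    nlinarith [hcs, hAmq, hr0, ha0, hAs0, sq_nonneg (s ⬝ᵥ (A *ᵥ s) -
      ((A *ᵥ s) ∘ Sum.inl) ⬝ᵥ (D_FF⁻¹ *ᵥ ((A *ᵥ s) ∘ Sum.inl)))]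
  -- final assembly
  intro x
  set y := R ^ ν *ᵥ x with hy
  set s := T *ᵥ y with hsdef
  set z := W *ᵥ s with hz
  have hMGx : MG *ᵥ x = R ^ ν *ᵥ s := by
    rw [hMG, ← mulVec_mulVec, ← mulVec_mulVec, ← hy, ← hsdef]
  have hPAs : Pᵀ *ᵥ (A *ᵥ s) = 0 := by
    rw [hsdef, mulVec_mulVec, mulVec_mulVec, hPAT, zero_mulVec]
  have hWz : W *ᵥ z = A *ᵥ s := by rw [hz, mulVec_mulVec, hWW]
  have hzz : z ⬝ᵥ z = s ⬝ᵥ (A *ᵥ s) := by rw [hz, ← normW]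
  have hBz : z ⬝ᵥ z ≤ z ⬝ᵥ (B *ᵥ z) := by
    rw [hBquad, hWz, hzz]
    exact hF2 s hPAs
  have hq1 : (MG *ᵥ x) ⬝ᵥ (A *ᵥ (MG *ᵥ x)) = z ⬝ᵥ ((Q ^ (2*ν)) *ᵥ z) := by
    rw [hMGx, normW, hWRv, ← hz, hQnorm]
  have hq2 : z ⬝ᵥ ((Q ^ (2*ν)) *ᵥ z) ≤ (1 - b) * (z ⬝ᵥ z) := by
    have h1 := spec1 z
    have h2 : b * (z ⬝ᵥ z) ≤ b * (z ⬝ᵥ (B *ᵥ z)) := mul_le_mul_of_nonneg_left hBz hb0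
    nlinarith
  have hq3 : z ⬝ᵥ z ≤ x ⬝ᵥ (A *ᵥ x) := by
    have e2 := hTcon y
    rw [← hsdef] at e2
    have e3 : y ⬝ᵥ (A *ᵥ y) ≤ x ⬝ᵥ (A *ᵥ x) := by
      rw [normW, hy, hWRv, hQnorm, normW x]
      exact spec0 (W *ᵥ x)
    rw [hzz]
    linarith
  rw [hc, hq1]
  calc z ⬝ᵥ ((Q ^ (2*ν)) *ᵥ z) ≤ (1 - b) * (z ⬝ᵥ z) := hq2
    _ ≤ (1 - b) * (x ⬝ᵥ (A *ᵥ x)) := mul_le_mul_of_nonneg_left hq3 hb1
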